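/- arXiv:1805.07578 — 2 statements merged into one kernel-verified Lean document; each statement's English description precedes it below -/
import Mathlib

section
/- For the energy-preserving collocation-like method on a vector space V with inner product g: if u^1 is defined by a degree-s polynomial σ with σ(0) = u^0, σ'(c_j h) = Ω_j G_j where G_j = ∫₀¹ (l_j(ξ)/b_j) ∇H(σ(ξh)) dξ and each Ω_j is skew-symmetric, and u^1 = σ(h), then H(u^1) = H(u^0). -/
open RealInnerProductSpace

lemma lagrange_exact {s : ℕ} (c : Fin s → ℝ) (hc : Function.Injective c)
    (P : Polynomial ℝ) (hP : P.degree < s) (t : ℝ) :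
    P.eval t = ∑ j, P.eval (c j) * ∏ i ∈ Finset.univ.erase j, (t - c i) / (c j - c i) := by
  conv_lhs => rw [Lagrange.eq_interpolate (f := P) (s := Finset.univ)
    (Set.injOn_of_injective hc) (by simpa using hP)]
  rw [Lagrange.interpolate_apply, Polynomial.eval_finset_sum]
  refine Finset.sum_congr rfl fun j _ => ?_
  rw [Polynomial.eval_mul, Polynomial.eval_C, Lagrange.basis, Polynomial.eval_prod]
  congr 1
  refine Finset.prod_congr rfl fun i _ => ?_
  rw [Lagrange.basisDivisor, Polynomial.eval_mul, Polynomial.eval_C, Polynomial.eval_sub,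
    Polynomial.eval_X, Polynomial.eval_C, div_eq_mul_inv, mul_comm]

/-- Energy preservation of the collocation-like method (Euclidean specialization):
if `σ` is a polynomial of degree ≤ s with `σ(0) = u⁰`,
`σ'(c_j h) = Ω_j G_j` where `G_j = ∫₀¹ (l_j(ξ)/b_j) ∇H(σ(ξh)) dξ` and each `Ω_j` is
skew-symmetric, then `u¹ = σ(h)` satisfies `H(u¹) = H(u⁰)`. -/
theorem collocation_method_preserves_energy
    {n : ℕ} (H : EuclideanSpace ℝ (Fin n) → ℝ) (hH : ContDiff ℝ 1 H)
    {s : ℕ} (hs : 1 ≤ s) (c : Fin s → ℝ) (hc : Function.Injective c)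
    (l : Fin s → ℝ → ℝ)
    (hl : ∀ j ξ, l j ξ = ∏ i ∈ Finset.univ.erase j, (ξ - c i) / (c j - c i))
    (b : Fin s → ℝ) (hb : ∀ j, b j = ∫ ξ in (0:ℝ)..1, l j ξ) (hb0 : ∀ j, b j ≠ 0)
    (h : ℝ) (hh : 0 < h)
    (Ω : Fin s → EuclideanSpace ℝ (Fin n) →ₗ[ℝ] EuclideanSpace ℝ (Fin n))
    (hskew : ∀ j x, ⟪x, Ω j x⟫ = 0)
    (σ : ℝ → EuclideanSpace ℝ (Fin n)) (a : Fin (s + 1) → EuclideanSpace ℝ (Fin n))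
    (hσ : σ = fun t => ∑ i : Fin (s + 1), t ^ (i : ℕ) • a i)
    (u0 u1 : EuclideanSpace ℝ (Fin n))
    (hσ0 : σ 0 = u0)
    (hcoll : ∀ j, deriv σ (c j * h) =
      Ω j (∫ ξ in (0:ℝ)..1, (l j ξ / b j) • gradient H (σ (ξ * h))))
    (hu1 : u1 = σ h) :
    H u1 = H u0 := by
  set σ' : ℝ → EuclideanSpace ℝ (Fin n) := fun t => ∑ i : Fin (s + 1), (((i : ℕ) : ℝ) * t ^ ((i : ℕ) - 1)) • a i
    with hσ'
  have hderiv : ∀ t, HasDerivAt σ (σ' t) t := by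
    intro t
    rw [hσ]
    exact HasDerivAt.fun_sum fun i _ => (hasDerivAt_pow _ t).smul_const (a i)
  have hderiv' : deriv σ = σ' := funext fun t => (hderiv t).deriv
  -- continuity facts
  have hσc : Continuous σ := by
    rw [hσ]; exact continuous_finset_sum _ fun i _ => (continuous_pow _).smul continuous_const
  have hσ'c : Continuous σ' := by
    rw [hσ']
    exact continuous_finset_sum _ fun i _ =>
      ((continuous_const.mul (continuous_pow _)).smul continuous_const)
  have hlc : ∀ j, Continuous (l j) := by
    intro j
    have : l j = fun ξ => ∏ i ∈ Finset.univ.erase j, (ξ - c i) / (c j - c i) := funext (hl j)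
    rw [this]
    exact continuous_finset_prod _ fun i _ => (continuous_id.sub continuous_const).div_const _
  have hgrad : ∀ x : EuclideanSpace ℝ (Fin n), HasGradientAt H (gradient H x) x :=
    fun x => (hH.differentiable one_ne_zero x).hasGradientAt
  have hsum : ∀ {m : ℕ} (v : Fin m → EuclideanSpace ℝ (Fin n)) (k : Fin n),
      (∑ i, v i) k = ∑ i, v i k := by
    intro m v k
    rw [show (∑ i, v i) k = EuclideanSpace.proj k (∑ i, v i) from rfl, map_sum]
    rfl
  have hgc : Continuous (fun x : EuclideanSpace ℝ (Fin n) => gradient H x) := by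
    have heq : (fun x : EuclideanSpace ℝ (Fin n) => gradient H x)
        = fun x => (InnerProductSpace.toDual ℝ (EuclideanSpace ℝ (Fin n))).symm (fderiv ℝ H x) :=
      rfl
    rw [heq]
    exact (LinearIsometryEquiv.continuous _).comp (hH.continuous_fderiv one_ne_zero)
  set g : ℝ → EuclideanSpace ℝ (Fin n) := fun t => gradient H (σ (t * h)) with hg
  have hgcont : Continuous g := hgc.comp (hσc.comp (continuous_id.mul continuous_const))
  set D : Fin s → EuclideanSpace ℝ (Fin n) := fun j => deriv σ (c j * h) with hD
  -- Lagrange interpolation exactness for the derivative polynomial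
  have hinterp : ∀ t : ℝ, deriv σ (t * h) = ∑ j, l j t • D j := by
    intro t
    ext k
    set P : Polynomial ℝ := ∑ i : Fin (s + 1),
      Polynomial.C (((i : ℕ) : ℝ) * h ^ ((i : ℕ) - 1) * a i k) * Polynomial.X ^ ((i : ℕ) - 1)
      with hP
    have hPdeg : P.degree < s := by
      refine lt_of_le_of_lt (Polynomial.degree_sum_le _ _) ?_
      rw [Finset.sup_lt_iff (by exact_mod_cast WithBot.bot_lt_coe s)]
      intro i _
      refine lt_of_le_of_lt (Polynomial.degree_C_mul_X_pow_le _ _) ?_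
      have := i.isLt
      exact_mod_cast (by omega : (i : ℕ) - 1 < s)
    have hPeval : ∀ u : ℝ, (deriv σ (u * h)) k = P.eval u := by
      intro u
      rw [hderiv', hP]
      simp only [hσ', hsum, PiLp.smul_apply, smul_eq_mul,
        Polynomial.eval_finset_sum, Polynomial.eval_mul, Polynomial.eval_C,
        Polynomial.eval_pow, Polynomial.eval_X]
      refine Finset.sum_congr rfl fun i _ => ?_
      rw [mul_pow]
      ring
    have := lagrange_exact c hc P hPdeg t
    rw [hPeval t, this]
    have hRHS : (∑ j, l j t • D j) k = ∑ j, l j t * (D j) k := by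
      simp [hsum]
    rw [hRHS]
    refine Finset.sum_congr rfl fun j _ => ?_
    rw [← hl j t, hD]
    simp only []
    rw [hPeval (c j), mul_comm]
  -- derivative of t ↦ H (σ (t * h))
  have hf : ∀ t : ℝ, HasDerivAt (fun t => H (σ (t * h))) (h * ⟪g t, deriv σ (t * h)⟫) t := by
    intro t
    have h1 : HasDerivAt (fun t : ℝ => σ (t * h)) (h • deriv σ (t * h)) t := by
      have h0 : HasDerivAt (fun t : ℝ => t * h) h t := hasDerivAt_mul_const h
      have := (hderiv (t * h)).scomp t h0
      simpa [hderiv', Function.comp_def] using this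
    have h2 := ((hgrad (σ (t * h))).hasFDerivAt).comp_hasDerivAt t h1
    simpa [InnerProductSpace.toDual_apply_apply, real_inner_smul_right, hg, Function.comp_def] using h2
  have hderivcont : Continuous (fun t : ℝ => deriv σ (t * h)) := by
    rw [hderiv']; exact hσ'c.comp (continuous_id.mul continuous_const)
  have hintcont : Continuous (fun t => h * ⟪g t, deriv σ (t * h)⟫) :=
    continuous_const.mul (hgcont.inner hderivcont)
  have hFTC : (∫ t in (0:ℝ)..1, h * ⟪g t, deriv σ (t * h)⟫)
      = H (σ (1 * h)) - H (σ (0 * h)) :=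
    intervalIntegral.integral_eq_sub_of_hasDerivAt (fun t _ => hf t)
      (hintcont.intervalIntegrable _ _)
  -- the integrals I j
  have hIint : ∀ j, IntervalIntegrable (fun t => l j t • g t) MeasureTheory.volume 0 1 :=
    fun j => ((hlc j).smul hgcont).intervalIntegrable _ _
  set I : Fin s → EuclideanSpace ℝ (Fin n) := fun j => ∫ t in (0:ℝ)..1, l j t • g t with hI
  have hDj : ∀ j, D j = (b j)⁻¹ • Ω j (I j) := by
    intro j
    have heq : (∫ ξ in (0:ℝ)..1, (l j ξ / b j) • g ξ) = (b j)⁻¹ • I j := by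
      rw [hI]
      simp only []
      rw [← intervalIntegral.integral_smul]
      congr 1
      funext ξ
      rw [smul_smul, div_eq_mul_inv, mul_comm]
    rw [hD]
    simp only []
    rw [hcoll j]
    rw [show (fun ξ => (l j ξ / b j) • gradient H (σ (ξ * h)))
      = fun ξ => (l j ξ / b j) • g ξ from rfl] at *
    rw [heq, map_smul]
  have hzero : ∀ j, (∫ t in (0:ℝ)..1, l j t * ⟪g t, D j⟫) = 0 := by
    intro j
    have hrw : ∀ t, l j t * ⟪g t, D j⟫ = (innerSL ℝ (D j)) (l j t • g t) := by
      intro t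
      rw [innerSL_apply_apply, real_inner_smul_right, real_inner_comm]
    simp_rw [hrw]
    rw [ContinuousLinearMap.intervalIntegral_comp_comm _ (hIint j)]
    rw [innerSL_apply_apply, hDj j, real_inner_smul_left, real_inner_comm]
    rw [hskew j (I j), mul_zero]
  -- putting it together
  have hmain : (∫ t in (0:ℝ)..1, h * ⟪g t, deriv σ (t * h)⟫) = 0 := by
    have hrw : ∀ t : ℝ, h * ⟪g t, deriv σ (t * h)⟫
        = ∑ j, h * (l j t * ⟪g t, D j⟫) := by
      intro t
      rw [hinterp t, inner_sum, Finset.mul_sum]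
      refine Finset.sum_congr rfl fun j _ => ?_
      rw [real_inner_smul_right]
    simp_rw [hrw]
    rw [intervalIntegral.integral_finset_sum (f := fun j t => h * (l j t * ⟪g t, D j⟫)) (fun j _ =>
      (continuous_const.mul ((hlc j).mul (hgcont.inner continuous_const))).intervalIntegrable _ _)]
    refine Finset.sum_eq_zero fun j _ => ?_
    rw [intervalIntegral.integral_const_mul, hzero j, mul_zero]
  rw [hmain] at hFTC
  rw [hu1, hσ0.symm]
  rw [one_mul] at hFTC
  rw [zero_mul] at hFTC
  linarith [hFTC]
end

section
/- The average vector field method u^{k+1} = u^k + h Ω̄ ∫₀¹ ∇H((1−ξ)u^k + ξu^{k+1}) dξ with Ω̄ skew-symmetric preserves H exactly: H(u^{k+1}) = H(u^k). -/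
open RealInnerProductSpace

/-- The average vector field method
`u^{k+1} = u^k + h Ω̄ ∫₀¹ ∇H((1−ξ)u^k + ξu^{k+1}) dξ`
with `Ω̄` skew-symmetric preserves `H` exactly: `H(u^{k+1}) = H(u^k)`. -/
theorem AVF_method_preserves_energy
    {n : ℕ} (H : EuclideanSpace ℝ (Fin n) → ℝ) (hH : ContDiff ℝ 1 H)
    (Ω : EuclideanSpace ℝ (Fin n) →ₗ[ℝ] EuclideanSpace ℝ (Fin n))
    (hskew : ∀ x, ⟪x, Ω x⟫ = 0)
    (h : ℝ) (hh : 0 < h) (uk uk1 : EuclideanSpace ℝ (Fin n))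
    (hstep : uk1 = uk + h • Ω (∫ ξ in (0:ℝ)..1, gradient H ((1 - ξ) • uk + ξ • uk1))) :
    H uk1 = H uk := by
  set d := uk1 - uk with hd
  set γ : ℝ → EuclideanSpace ℝ (Fin n) := fun ξ => (1 - ξ) • uk + ξ • uk1 with hγ
  have hγderiv : ∀ ξ : ℝ, HasDerivAt γ d ξ := by
    intro ξ
    have h1 : HasDerivAt (fun ξ : ℝ => (1 - ξ) • uk) ((-1 : ℝ) • uk) ξ :=
      ((hasDerivAt_id ξ).const_sub 1).smul_const uk
    have h2 : HasDerivAt (fun ξ : ℝ => ξ • uk1) ((1 : ℝ) • uk1) ξ :=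
      (hasDerivAt_id ξ).smul_const uk1
    have := h1.add h2
    have heq : (-1 : ℝ) • uk + (1 : ℝ) • uk1 = d := by
      simp [hd]; abel
    rw [heq] at this
    exact this
  have hdiff := hH.differentiable one_ne_zero
  have hgcont : Continuous fun x => gradient H x :=
    (InnerProductSpace.toDual ℝ _).symm.continuous.comp (hH.continuous_fderiv one_ne_zero)
  have hcontγ : Continuous γ := by
    apply Continuous.add
    · exact (continuous_const.sub continuous_id).smul continuous_const
    · exact continuous_id.smul continuous_const
  have hφcont : Continuous fun ξ : ℝ => (⟪d, gradient H (γ ξ)⟫ : ℝ) :=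
    continuous_const.inner (hgcont.comp hcontγ)
  have hderiv : ∀ ξ ∈ Set.uIcc (0:ℝ) 1,
      HasDerivAt (fun t => H (γ t)) (⟪d, gradient H (γ ξ)⟫) ξ := by
    intro ξ _
    have hg : HasGradientAt H (gradient H (γ ξ)) (γ ξ) := (hdiff (γ ξ)).hasGradientAt
    have := hg.hasFDerivAt.comp_hasDerivAt ξ (hγderiv ξ)
    exact this.congr_deriv (by simp [InnerProductSpace.toDual_apply_apply, real_inner_comm])
  have hint : IntervalIntegrable (fun ξ => gradient H (γ ξ)) MeasureTheory.volume 0 1 :=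
    (hgcont.comp hcontγ).intervalIntegrable 0 1
  have key : H (γ 1) - H (γ 0) = ∫ ξ in (0:ℝ)..1, ⟪d, gradient H (γ ξ)⟫ :=
    (intervalIntegral.integral_eq_sub_of_hasDerivAt hderiv
      (hφcont.intervalIntegrable 0 1)).symm
  have swap : (∫ ξ in (0:ℝ)..1, ⟪d, gradient H (γ ξ)⟫)
      = ⟪d, ∫ ξ in (0:ℝ)..1, gradient H (γ ξ)⟫ := by
    simpa using (innerSL ℝ d).intervalIntegral_comp_comm hint
  have hdv : d = h • Ω (∫ ξ in (0:ℝ)..1, gradient H (γ ξ)) := by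
    rw [hd, hstep]; abel
  have hzero : (⟪d, ∫ ξ in (0:ℝ)..1, gradient H (γ ξ)⟫ : ℝ) = 0 := by
    rw [hdv, real_inner_smul_left, real_inner_comm, hskew, mul_zero]
  have hfin : H (γ 1) - H (γ 0) = 0 := by rw [key, swap, hzero]
  have h1 : γ 1 = uk1 := by simp [hγ]
  have h0 : γ 0 = uk := by simp [hγ]
  rw [h1, h0] at hfin
  linarith
end
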